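/- Let 𝒜 be a finite nonempty set, μ a translation invariant probability measure on 𝒜^ℤ, and m ≥ 1 an integer. With G_k = 2^k ℤ and G_k^− = {j · 2^k : j < 0}, let B be any finite subset of G_m^− and, for 1 ≤ k ≤ m, let B_k be any finite subset of ({2^{k−1}} + G_k^−) ∪ G_k. Then the entropy density satisfies the strengthened upper bound s_μ ≤ (1/2^m) · S( {0} | B ) + Σ_{k=1}^m (1/2^k) · min( S( {0} | B ), S( {2^{k−1}} | B_k ) ). -/

import Mathlib

open MeasureTheory Real Filter Pointwise

/-- Probability of the cylinder set determined by the configuration `x` on the finite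
set `Λ ⊆ ℤ`. -/
noncomputable def cylProb1 {𝒜 : Type*} [MeasurableSpace 𝒜]
    (μ : Measure (ℤ → 𝒜)) (Λ : Finset ℤ) (x : Λ → 𝒜) : ℝ :=
  (μ {ω | ∀ v : Λ, ω v.1 = x v}).toReal

/-- The entropy `S(Λ)` of a finite set of sites `Λ ⊆ ℤ` with respect to `μ`. -/
noncomputable def entS1 {𝒜 : Type*} [Fintype 𝒜] [MeasurableSpace 𝒜]
    (μ : Measure (ℤ → 𝒜)) (Λ : Finset ℤ) : ℝ :=
  -∑ x : (Λ → 𝒜), cylProb1 μ Λ x * Real.log (cylProb1 μ Λ x)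

/-- The conditional entropy `S(Λ | Λ')` (terms with zero probability vanish since
`Real.log 0 = 0` and `0 * log 0 = 0`). -/
noncomputable def condEnt1 {𝒜 : Type*} [Fintype 𝒜] [MeasurableSpace 𝒜]
    (μ : Measure (ℤ → 𝒜)) (Λ Λ' : Finset ℤ) : ℝ :=
  -∑ x : ((Λ ∪ Λ' : Finset ℤ) → 𝒜),
      cylProb1 μ (Λ ∪ Λ') x *
        Real.log (cylProb1 μ (Λ ∪ Λ') x /
          cylProb1 μ Λ' (fun v => x ⟨v.1, Finset.mem_union_right Λ v.2⟩))

/-- `μ` is translation invariant: it is preserved by the shift `σ`, `(σx)(i) = x(i+1)`. -/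
def TransInv1 {𝒜 : Type*} [MeasurableSpace 𝒜] (μ : Measure (ℤ → 𝒜)) : Prop :=
  μ.map (fun ω (i : ℤ) => ω (i + 1)) = μ

open Classical in
/-- The finite set `Λ' ∩ [-n, n]` for a (possibly infinite) `Λ' ⊆ ℤ`. -/
noncomputable def interBox1 (Λ' : Set ℤ) (n : ℕ) : Finset ℤ :=
  (Finset.Icc (-(n : ℤ)) (n : ℤ)).filter (· ∈ Λ')


set_option linter.unusedSectionVars false
set_option linter.unusedVariables false

namespace EntAux

/-! ### Abstract entropy lemmas on finite types -/

/-- Chain rule (exact). -/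
lemma lemA {α β : Type*} [Fintype α] [Fintype β] (ρ : α × β → ℝ) (h0 : ∀ p, 0 ≤ ρ p) :
    -∑ p : α × β, ρ p * Real.log (ρ p / (∑ a, ρ (a, p.2))) =
      (-∑ p : α × β, ρ p * Real.log (ρ p)) -
        (-∑ b, (∑ a, ρ (a, b)) * Real.log (∑ a, ρ (a, b))) := by
  have key : ∀ p : α × β, ρ p * Real.log (ρ p / (∑ a, ρ (a, p.2)))
      = ρ p * Real.log (ρ p) - ρ p * Real.log (∑ a, ρ (a, p.2)) := by
    intro p
    rcases eq_or_lt_of_le (h0 p) with h | h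
    · simp [← h]
    · have hq : 0 < ∑ a, ρ (a, p.2) :=
        lt_of_lt_of_le h (Finset.single_le_sum (fun a _ => h0 (a, p.2)) (Finset.mem_univ p.1))
      rw [Real.log_div (ne_of_gt h) (ne_of_gt hq), mul_sub]
  have h2 : ∑ p : α × β, ρ p * Real.log (∑ a, ρ (a, p.2))
      = ∑ b, (∑ a, ρ (a, b)) * Real.log (∑ a, ρ (a, b)) := by
    rw [Fintype.sum_prod_type_right]
    refine Finset.sum_congr rfl fun b _ => ?_
    show (∑ x, ρ (x, b) * Real.log (∑ a, ρ (a, b))) = _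
    rw [← Finset.sum_mul]
  simp only [key, Finset.sum_sub_distrib, h2]
  ring

/-- Gibbs: conditioning on a finer variable decreases conditional entropy. -/
lemma lemB {α β γ : Type*} [Fintype α] [Fintype β] [Fintype γ] [DecidableEq β]
    (ρ : α × γ → ℝ) (h0 : ∀ p, 0 ≤ ρ p) (pr : γ → β) (ρ' : α × β → ℝ)
    (hρ' : ∀ a b, ρ' (a, b) = ∑ c ∈ Finset.univ.filter (fun c => pr c = b), ρ (a, c)) :
    -∑ p : α × γ, ρ p * Real.log (ρ p / (∑ a, ρ (a, p.2)))
      ≤ -∑ p : α × β, ρ' p * Real.log (ρ' p / (∑ a, ρ' (a, p.2))) := by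
  set q : γ → ℝ := fun c => ∑ a, ρ (a, c) with hq
  set q' : β → ℝ := fun b => ∑ a, ρ' (a, b) with hq'
  have hρ'0 : ∀ a b, 0 ≤ ρ' (a, b) := fun a b => by
    rw [hρ']; exact Finset.sum_nonneg fun c _ => h0 _
  have hq0 : ∀ c, 0 ≤ q c := fun c => Finset.sum_nonneg fun a _ => h0 _
  have hq'0 : ∀ b, 0 ≤ q' b := fun b => Finset.sum_nonneg fun a _ => hρ'0 _ _
  -- ρ ≤ ρ' on fiber, q etc.
  have hle1 : ∀ a c, ρ (a, c) ≤ ρ' (a, pr c) := by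
    intro a c
    rw [hρ']
    exact Finset.single_le_sum (f := fun c => ρ (a, c)) (fun c _ => h0 _)
      (Finset.mem_filter.2 ⟨Finset.mem_univ c, rfl⟩)
  have hle2 : ∀ a c, ρ (a, c) ≤ q c := fun a c =>
    Finset.single_le_sum (fun a _ => h0 (a, c)) (Finset.mem_univ a)
  have hq'fib : ∀ b, q' b = ∑ c ∈ Finset.univ.filter (fun c => pr c = b), q c := by
    intro b
    rw [hq']
    simp only [hρ']
    rw [Finset.sum_comm]
  have hle3 : ∀ c, q c ≤ q' (pr c) := by
    intro c
    rw [hq'fib]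
    exact Finset.single_le_sum (f := fun c => q c) (fun c _ => hq0 _)
      (Finset.mem_filter.2 ⟨Finset.mem_univ c, rfl⟩)
  -- rewrite RHS as sum over α × γ
  have hRHS : ∑ p : α × β, ρ' p * Real.log (ρ' p / q' p.2)
      = ∑ p : α × γ, ρ p * Real.log (ρ' (p.1, pr p.2) / q' (pr p.2)) := by
    rw [Fintype.sum_prod_type, Fintype.sum_prod_type]
    refine Finset.sum_congr rfl fun a _ => ?_
    rw [← Finset.sum_fiberwise (Finset.univ : Finset γ) pr
      (fun c => ρ (a, c) * Real.log (ρ' (a, pr c) / q' (pr c)))]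
    refine Finset.sum_congr rfl fun b _ => ?_
    rw [hρ', Finset.sum_mul]
    refine Finset.sum_congr rfl fun c hc => ?_
    rw [← hρ' a b]
    have hcb := (Finset.mem_filter.1 hc).2
    subst hcb
    rfl
  rw [neg_le_neg_iff, hRHS]
  -- pointwise estimate
  set g : α × γ → ℝ := fun p => ρ' (p.1, pr p.2) * q p.2 / q' (pr p.2) with hg
  have hgsum : ∀ c, ∑ a, g (a, c) = q c := by
    intro c
    rcases eq_or_lt_of_le (hq'0 (pr c)) with h | h
    · have hqc : q c = 0 := le_antisymm (h ▸ hle3 c) (hq0 c)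
      simp [hg, hqc]
    · simp only [hg]
      rw [← Finset.sum_div, ← Finset.sum_mul]
      rw [show (∑ a, ρ' (a, pr c)) = q' (pr c) from rfl]
      field_simp
  have hpoint : ∀ p : α × γ, ρ p - g p ≤
      ρ p * Real.log (ρ p / q p.2) - ρ p * Real.log (ρ' (p.1, pr p.2) / q' (pr p.2)) := by
    rintro ⟨a, c⟩
    rcases eq_or_lt_of_le (h0 (a, c)) with h | h
    · simp only [← h, zero_mul, sub_zero, zero_sub, neg_nonpos]
      exact div_nonneg (mul_nonneg (hρ'0 _ _) (hq0 _)) (hq'0 _)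
    · have hρ'p : 0 < ρ' (a, pr c) := lt_of_lt_of_le h (hle1 a c)
      have hqp : 0 < q c := lt_of_lt_of_le h (hle2 a c)
      have hq'p : 0 < q' (pr c) := lt_of_lt_of_le hqp (hle3 c)
      have hgp : 0 < g (a, c) := by
        simp only [hg]; positivity
      have hlog : Real.log (g (a, c) / ρ (a, c)) ≤ g (a, c) / ρ (a, c) - 1 :=
        Real.log_le_sub_one_of_pos (by positivity)
      have hexp : Real.log (ρ (a, c) / q c) - Real.log (ρ' (a, pr c) / q' (pr c))
          = -Real.log (g (a, c) / ρ (a, c)) := by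
        simp only [hg]
        rw [Real.log_div (ne_of_gt h) (ne_of_gt hqp),
          Real.log_div (ne_of_gt hρ'p) (ne_of_gt hq'p),
          Real.log_div (by positivity) (ne_of_gt h),
          Real.log_div (by positivity) (ne_of_gt hq'p), Real.log_mul (ne_of_gt hρ'p) (ne_of_gt hqp)]
        ring
      have := mul_le_mul_of_nonneg_left hlog (le_of_lt h)
      rw [mul_sub, mul_one, mul_div_cancel₀ _ (ne_of_gt h)] at this
      calc ρ (a, c) - g (a, c) = -(g (a,c) - ρ (a,c)) := by ring
        _ ≤ -(ρ (a, c) * Real.log (g (a, c) / ρ (a, c))) := by linarith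
        _ = ρ (a,c) * (Real.log (ρ (a,c) / q c) - Real.log (ρ' (a, pr c) / q' (pr c))) := by
            rw [hexp]; ring
        _ = _ := by ring
  have hsum := Finset.sum_le_sum fun p (_ : p ∈ Finset.univ) => hpoint p
  have hzero' : ∑ p : α × γ, g p = ∑ p : α × γ, ρ p := by
    rw [Fintype.sum_prod_type_right, Fintype.sum_prod_type_right]
    refine Finset.sum_congr rfl fun c _ => ?_
    rw [hgsum c]
  rw [Finset.sum_sub_distrib, Finset.sum_sub_distrib] at hsum
  have hfin : ∑ p : α × γ, ρ p * Real.log (ρ' (p.1, pr p.2) / q' (pr p.2))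
      ≤ ∑ p : α × γ, ρ p * Real.log (ρ p / q p.2) := by linarith
  exact hfin


/-! ### Cylinder sets -/

section Cyl
variable {𝒜 : Type*} [Fintype 𝒜] [MeasurableSpace 𝒜] [MeasurableSingletonClass 𝒜]
variable (μ : Measure (ℤ → 𝒜)) [IsProbabilityMeasure μ]

def cylSet (Λ : Finset ℤ) (x : Λ → 𝒜) : Set (ℤ → 𝒜) := {ω | ∀ v : Λ, ω v.1 = x v}

lemma measurableSet_cylSet (Λ : Finset ℤ) (x : Λ → 𝒜) : MeasurableSet (cylSet Λ x) := by
  have h : cylSet Λ x = ⋂ v : Λ, (fun ω : ℤ → 𝒜 => ω v.1) ⁻¹' {x v} := by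
    ext ω; simp [cylSet, Set.mem_iInter]
  rw [h]
  exact MeasurableSet.iInter fun v => (measurable_pi_apply v.1) (measurableSet_singleton _)

lemma cylProb1_def (Λ : Finset ℤ) (x : Λ → 𝒜) : cylProb1 μ Λ x = (μ (cylSet Λ x)).toReal := rfl

lemma cylProb1_nonneg (Λ : Finset ℤ) (x : Λ → 𝒜) : 0 ≤ cylProb1 μ Λ x := ENNReal.toReal_nonneg

lemma cylProb1_le_one (Λ : Finset ℤ) (x : Λ → 𝒜) : cylProb1 μ Λ x ≤ 1 := by
  rw [cylProb1_def]
  have h := ENNReal.toReal_mono (by simp) (prob_le_one (μ := μ) (s := cylSet Λ x))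
  simpa using h

lemma cylProb1_mono {Λ Λ' : Finset ℤ} {x : Λ → 𝒜} {y : Λ' → 𝒜}
    (h : cylSet Λ x ⊆ cylSet Λ' y) : cylProb1 μ Λ x ≤ cylProb1 μ Λ' y :=
  ENNReal.toReal_mono (measure_ne_top μ _) (measure_mono h)

lemma cylSet_disjoint {Λ : Finset ℤ} {x y : Λ → 𝒜} (h : x ≠ y) :
    Disjoint (cylSet (𝒜 := 𝒜) Λ x) (cylSet Λ y) := by
  rw [Set.disjoint_left]
  intro ω hx hy
  exact h (funext fun v => by rw [← hx v, ← hy v])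

lemma sum_toReal_measure {ι : Type*} (s : Finset ι) (A : ι → Set (ℤ → 𝒜))
    (hm : ∀ i ∈ s, MeasurableSet (A i)) (hd : (s : Set ι).PairwiseDisjoint A) :
    ∑ i ∈ s, (μ (A i)).toReal = (μ (⋃ i ∈ s, A i)).toReal := by
  rw [measure_biUnion_finset hd hm, ENNReal.toReal_sum fun a _ => measure_ne_top μ _]

lemma sum_cylProb1 (Λ : Finset ℤ) : ∑ x : Λ → 𝒜, cylProb1 μ Λ x = 1 := by
  have hu : (⋃ x ∈ (Finset.univ : Finset (Λ → 𝒜)), cylSet Λ x) = Set.univ := by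
    ext ω
    simp only [Set.mem_iUnion, Set.mem_univ, iff_true, Finset.mem_univ, exists_true_left]
    exact ⟨fun v => ω v.1, fun v => rfl⟩
  have := sum_toReal_measure μ (Finset.univ : Finset (Λ → 𝒜)) (cylSet Λ)
    (fun x _ => measurableSet_cylSet Λ x)
    (fun x _ y _ hxy => cylSet_disjoint hxy)
  rw [hu] at this
  simp only [measure_univ, ENNReal.toReal_one] at this
  exact this

def restr {Λ Λ' : Finset ℤ} (h : Λ ⊆ Λ') (x : Λ' → 𝒜) : Λ → 𝒜 := fun v => x ⟨v.1, h v.2⟩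

lemma cylSet_subset_restr {Λ Λ' : Finset ℤ} (h : Λ ⊆ Λ') (x : Λ' → 𝒜) :
    cylSet Λ' x ⊆ cylSet Λ (restr h x) := fun ω hω v => hω ⟨v.1, h v.2⟩

def glue (Λ₁ Λ₂ : Finset ℤ) (u : Λ₁ → 𝒜) (z : Λ₂ → 𝒜) : ((Λ₁ ∪ Λ₂ : Finset ℤ) → 𝒜) :=
  fun v => if h : v.1 ∈ Λ₁ then u ⟨v.1, h⟩ else z ⟨v.1, (Finset.mem_union.mp v.2).resolve_left h⟩

lemma glue_apply_left {Λ₁ Λ₂ : Finset ℤ} (u : Λ₁ → 𝒜) (z : Λ₂ → 𝒜) (v : ℤ) (hv : v ∈ Λ₁)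
    (hv' : v ∈ Λ₁ ∪ Λ₂) : glue Λ₁ Λ₂ u z ⟨v, hv'⟩ = u ⟨v, hv⟩ := dif_pos hv

lemma glue_apply_right {Λ₁ Λ₂ : Finset ℤ} (hd : Disjoint Λ₁ Λ₂) (u : Λ₁ → 𝒜) (z : Λ₂ → 𝒜)
    (v : ℤ) (hv : v ∈ Λ₂) (hv' : v ∈ Λ₁ ∪ Λ₂) :
    glue Λ₁ Λ₂ u z ⟨v, hv'⟩ = z ⟨v, hv⟩ := dif_neg (Finset.disjoint_right.mp hd hv)

lemma cylSet_glue {Λ₁ Λ₂ : Finset ℤ} (hd : Disjoint Λ₁ Λ₂) (u : Λ₁ → 𝒜) (z : Λ₂ → 𝒜) :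
    cylSet (Λ₁ ∪ Λ₂) (glue Λ₁ Λ₂ u z) = cylSet Λ₁ u ∩ cylSet Λ₂ z := by
  ext ω
  constructor
  · intro h
    constructor
    · intro v
      have := h ⟨v.1, Finset.mem_union_left _ v.2⟩
      rwa [glue_apply_left u z v.1 v.2] at this
    · intro v
      have := h ⟨v.1, Finset.mem_union_right _ v.2⟩
      rwa [glue_apply_right hd u z v.1 v.2] at this
  · rintro ⟨h1, h2⟩ v
    rcases Finset.mem_union.mp v.2 with hv | hv
    · rw [show v = (⟨v.1, v.2⟩ : {x // x ∈ Λ₁ ∪ Λ₂}) from rfl, glue_apply_left u z v.1 hv]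
      exact h1 ⟨v.1, hv⟩
    · rw [show v = (⟨v.1, v.2⟩ : {x // x ∈ Λ₁ ∪ Λ₂}) from rfl, glue_apply_right hd u z v.1 hv]
      exact h2 ⟨v.1, hv⟩

lemma restr_glue_right {Λ₁ Λ₂ : Finset ℤ} (hd : Disjoint Λ₁ Λ₂) (u : Λ₁ → 𝒜) (z : Λ₂ → 𝒜) :
    (fun v : Λ₂ => glue Λ₁ Λ₂ u z ⟨v.1, Finset.mem_union_right Λ₁ v.2⟩) = z := by
  funext v; exact glue_apply_right hd u z v.1 v.2 _

noncomputable def glueEquiv {Λ₁ Λ₂ : Finset ℤ} (hd : Disjoint Λ₁ Λ₂) :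
    ((Λ₁ → 𝒜) × (Λ₂ → 𝒜)) ≃ ((Λ₁ ∪ Λ₂ : Finset ℤ) → 𝒜) where
  toFun p := glue Λ₁ Λ₂ p.1 p.2
  invFun x := (restr Finset.subset_union_left x, restr Finset.subset_union_right x)
  left_inv p := by
    ext v
    · exact glue_apply_left p.1 p.2 v.1 v.2 _
    · exact glue_apply_right hd p.1 p.2 v.1 v.2 _
  right_inv x := by
    funext v
    show glue Λ₁ Λ₂ (restr Finset.subset_union_left x) (restr Finset.subset_union_right x) v = x v
    rcases Finset.mem_union.mp v.2 with hv | hv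
    · exact glue_apply_left (restr Finset.subset_union_left x) (restr Finset.subset_union_right x) v.1 hv v.2
    · exact glue_apply_right hd (restr Finset.subset_union_left x) (restr Finset.subset_union_right x) v.1 hv v.2

lemma sum_glue_left {Λ₁ Λ₂ : Finset ℤ} (hd : Disjoint Λ₁ Λ₂) (z : Λ₂ → 𝒜) :
    ∑ u : Λ₁ → 𝒜, cylProb1 μ (Λ₁ ∪ Λ₂) (glue Λ₁ Λ₂ u z) = cylProb1 μ Λ₂ z := by
  simp only [cylProb1_def, cylSet_glue hd]
  rw [sum_toReal_measure μ _ _ (fun x _ => ((measurableSet_cylSet Λ₁ x).inter (measurableSet_cylSet Λ₂ z)))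
    (fun x _ y _ hxy => by exact (cylSet_disjoint hxy).mono Set.inter_subset_left Set.inter_subset_left)]
  refine congrArg ENNReal.toReal (congrArg _ ?_)
  ext ω
  simp only [Set.mem_iUnion, Set.mem_inter_iff, Finset.mem_univ, exists_true_left]
  constructor
  · rintro ⟨u, _, h⟩; exact h
  · intro h; exact ⟨fun v => ω v.1, fun v => rfl, h⟩

lemma sum_glue_right {Λ₁ Λ₂ : Finset ℤ} (hd : Disjoint Λ₁ Λ₂) (u : Λ₁ → 𝒜) :
    ∑ z : Λ₂ → 𝒜, cylProb1 μ (Λ₁ ∪ Λ₂) (glue Λ₁ Λ₂ u z) = cylProb1 μ Λ₁ u := by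
  simp only [cylProb1_def, cylSet_glue hd]
  rw [sum_toReal_measure μ _ _ (fun z _ => ((measurableSet_cylSet Λ₁ u).inter (measurableSet_cylSet Λ₂ z)))
    (fun x _ y _ hxy => by exact (cylSet_disjoint hxy).mono Set.inter_subset_right Set.inter_subset_right)]
  refine congrArg ENNReal.toReal (congrArg _ ?_)
  ext ω
  simp only [Set.mem_iUnion, Set.mem_inter_iff, Finset.mem_univ, exists_true_left]
  constructor
  · rintro ⟨z, h, _⟩; exact h
  · intro h; exact ⟨fun v => ω v.1, h, fun v => rfl⟩

lemma sum_glue_fiber {Λ₁ Λ₂ Λ' : Finset ℤ} [DecidableEq (Λ' → 𝒜)] (hd : Disjoint Λ₁ Λ₂) (hs : Λ' ⊆ Λ₂)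
    (u : Λ₁ → 𝒜) (y : Λ' → 𝒜) :
    ∑ z ∈ Finset.univ.filter (fun z : Λ₂ → 𝒜 => restr hs z = y),
      cylProb1 μ (Λ₁ ∪ Λ₂) (glue Λ₁ Λ₂ u z) = cylProb1 μ (Λ₁ ∪ Λ') (glue Λ₁ Λ' u y) := by
  simp only [cylProb1_def, cylSet_glue hd, cylSet_glue (hd.mono_right hs)]
  rw [sum_toReal_measure μ _ _ (fun z _ => ((measurableSet_cylSet Λ₁ u).inter (measurableSet_cylSet Λ₂ z)))
    (fun x hx y' hy' hxy => by exact (cylSet_disjoint hxy).mono Set.inter_subset_right Set.inter_subset_right)]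
  refine congrArg ENNReal.toReal (congrArg _ ?_)
  ext ω
  simp only [Set.mem_iUnion, Set.mem_inter_iff, Finset.mem_filter, Finset.mem_univ, true_and]
  constructor
  · rintro ⟨z, hz, hωu, hωz⟩
    refine ⟨hωu, fun v => ?_⟩
    have := hωz ⟨v.1, hs v.2⟩
    rw [this, ← hz]
    rfl
  · rintro ⟨hωu, hωy⟩
    refine ⟨fun v => ω v.1, ?_, hωu, fun v => rfl⟩
    funext v
    exact hωy v

end Cyl

/-! ### Entropy lemmas for cylinder probabilities -/

section Ent
variable {𝒜 : Type*} [Fintype 𝒜] [MeasurableSpace 𝒜] [MeasurableSingletonClass 𝒜]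
variable (μ : Measure (ℤ → 𝒜)) [IsProbabilityMeasure μ]

lemma entS1_transport {Λ Λ' : Finset ℤ} (hd : Disjoint Λ Λ') :
    entS1 μ (Λ ∪ Λ') = -∑ p : (Λ → 𝒜) × (Λ' → 𝒜),
      cylProb1 μ (Λ ∪ Λ') (glue Λ Λ' p.1 p.2) *
        Real.log (cylProb1 μ (Λ ∪ Λ') (glue Λ Λ' p.1 p.2)) := by
  unfold entS1
  congr 1
  exact (Fintype.sum_equiv (glueEquiv (𝒜 := 𝒜) hd) _ _ fun p => rfl).symm

lemma condEnt1_transport {Λ Λ' : Finset ℤ} (hd : Disjoint Λ Λ') :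
    condEnt1 μ Λ Λ' = -∑ p : (Λ → 𝒜) × (Λ' → 𝒜),
      cylProb1 μ (Λ ∪ Λ') (glue Λ Λ' p.1 p.2) *
        Real.log (cylProb1 μ (Λ ∪ Λ') (glue Λ Λ' p.1 p.2) /
          (∑ a, cylProb1 μ (Λ ∪ Λ') (glue Λ Λ' a p.2))) := by
  unfold condEnt1
  congr 1
  refine (Fintype.sum_equiv (glueEquiv (𝒜 := 𝒜) hd) _ _ fun p => ?_).symm
  show _ = cylProb1 μ (Λ ∪ Λ') (glue Λ Λ' p.1 p.2) *
      Real.log (cylProb1 μ (Λ ∪ Λ') (glue Λ Λ' p.1 p.2) /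
        cylProb1 μ Λ' (fun v => glue Λ Λ' p.1 p.2 ⟨v.1, Finset.mem_union_right Λ v.2⟩))
  rw [restr_glue_right hd, sum_glue_left μ hd]

lemma condEnt1_eq {Λ Λ' : Finset ℤ} (hd : Disjoint Λ Λ') :
    condEnt1 μ Λ Λ' = entS1 μ (Λ ∪ Λ') - entS1 μ Λ' := by
  have hA := lemA (fun p : (Λ → 𝒜) × (Λ' → 𝒜) => cylProb1 μ (Λ ∪ Λ') (glue Λ Λ' p.1 p.2))
    (fun p => cylProb1_nonneg μ _ _)
  rw [condEnt1_transport μ hd, hA, ← entS1_transport μ hd]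
  congr 1
  unfold entS1
  congr 1
  refine Fintype.sum_congr _ _ fun z => ?_
  rw [sum_glue_left μ hd]

lemma condEnt1_mono {Λ Λ' Λ'' : Finset ℤ} (hd : Disjoint Λ Λ'') (hs : Λ' ⊆ Λ'') :
    condEnt1 μ Λ Λ'' ≤ condEnt1 μ Λ Λ' := by
  classical
  rw [condEnt1_transport μ hd, condEnt1_transport μ (hd.mono_right hs)]
  exact lemB (fun p : (Λ → 𝒜) × (Λ'' → 𝒜) => cylProb1 μ (Λ ∪ Λ'') (glue Λ Λ'' p.1 p.2))
    (fun p => cylProb1_nonneg μ _ _) (restr hs)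
    (fun p : (Λ → 𝒜) × (Λ' → 𝒜) => cylProb1 μ (Λ ∪ Λ') (glue Λ Λ' p.1 p.2))
    (fun a b => (sum_glue_fiber μ hd hs a b).symm)

lemma entS1_nonneg (Λ : Finset ℤ) : 0 ≤ entS1 μ Λ := by
  unfold entS1
  rw [neg_nonneg]
  refine Finset.sum_nonpos fun x _ => ?_
  exact mul_nonpos_of_nonneg_of_nonpos (cylProb1_nonneg μ _ _)
    (Real.log_nonpos (cylProb1_nonneg μ _ _) (cylProb1_le_one μ _ _))

lemma condEnt1_nonneg (Λ Λ' : Finset ℤ) : 0 ≤ condEnt1 μ Λ Λ' := by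
  unfold condEnt1
  rw [neg_nonneg]
  refine Finset.sum_nonpos fun x _ => ?_
  refine mul_nonpos_of_nonneg_of_nonpos (cylProb1_nonneg μ _ _) ?_
  set p := cylProb1 μ (Λ ∪ Λ') x with hp
  set q := cylProb1 μ Λ' (fun v => x ⟨v.1, Finset.mem_union_right Λ v.2⟩) with hq
  have hpq : p ≤ q := cylProb1_mono μ (cylSet_subset_restr Finset.subset_union_right x)
  rcases eq_or_lt_of_le (cylProb1_nonneg μ (Λ ∪ Λ') x) with h | h
  · rw [hp, ← h]
    simp
  · have hq0 : 0 < q := lt_of_lt_of_le h hpq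
    exact Real.log_nonpos (by positivity) (div_le_one_of_le₀ hpq (le_of_lt hq0))

lemma entS1_empty : entS1 (𝒜 := 𝒜) μ ∅ = 0 := by
  unfold entS1
  have h : ∀ x : ((∅ : Finset ℤ) → 𝒜), cylProb1 μ ∅ x = 1 := by
    intro x
    have h2 : cylSet (𝒜 := 𝒜) ∅ x = Set.univ :=
      Set.eq_univ_iff_forall.mpr (fun ω v => absurd v.2 (Finset.notMem_empty v.1))
    rw [cylProb1_def, h2]
    simp
  simp [h]

lemma condEnt1_empty_right (Λ : Finset ℤ) : condEnt1 (𝒜 := 𝒜) μ Λ ∅ = entS1 μ Λ := by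
  rw [condEnt1_eq μ (Finset.disjoint_empty_right Λ), Finset.union_empty, entS1_empty, sub_zero]

lemma entS1_insert_le {Λ C : Finset ℤ} {a : ℤ} (ha : a ∉ Λ) (hC : C ⊆ Λ) :
    entS1 μ (insert a Λ) ≤ entS1 μ Λ + condEnt1 μ {a} C := by
  have hd : Disjoint ({a} : Finset ℤ) Λ := by
    simp [Finset.disjoint_left, ha]
  rw [Finset.insert_eq, ← sub_le_iff_le_add', ← condEnt1_eq μ hd]
  exact condEnt1_mono μ hd hC

lemma entS1_union_le {Λ Λ' : Finset ℤ} (hd : Disjoint Λ Λ') :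
    entS1 μ (Λ ∪ Λ') ≤ entS1 μ Λ + entS1 μ Λ' := by
  have h := condEnt1_mono μ hd (Finset.empty_subset Λ')
  rw [condEnt1_empty_right] at h
  have h2 := condEnt1_eq μ hd
  linarith

end Ent


/-! ### Translation invariance -/

section Trans
variable {𝒜 : Type*} [Fintype 𝒜] [MeasurableSpace 𝒜] [MeasurableSingletonClass 𝒜]
variable (μ : Measure (ℤ → 𝒜)) [IsProbabilityMeasure μ]

def shiftMap (a : ℤ) : (ℤ → 𝒜) → (ℤ → 𝒜) := fun ω i => ω (i + a)

lemma measurable_shiftMap (a : ℤ) : Measurable (shiftMap (𝒜 := 𝒜) a) :=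
  measurable_pi_lambda _ fun i => measurable_pi_apply (i + a)

lemma shiftMap_comp (a b : ℤ) :
    shiftMap (𝒜 := 𝒜) a ∘ shiftMap b = shiftMap (b + a) := by
  funext ω i
  show ω (i + a + b) = ω (i + (b + a))
  ring_nf

lemma shiftMap_zero : shiftMap (𝒜 := 𝒜) 0 = id := by
  funext ω i
  show ω (i + 0) = ω i
  rw [add_zero]

lemma map_shiftMap (hinv : TransInv1 μ) (a : ℤ) : μ.map (shiftMap a) = μ := by
  have h1 : μ.map (shiftMap (𝒜 := 𝒜) 1) = μ := hinv
  have hcompose : ∀ b c : ℤ, μ.map (shiftMap b) = μ → μ.map (shiftMap c) = μ →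
      μ.map (shiftMap (b + c)) = μ := by
    intro b c hb hc
    rw [← shiftMap_comp (𝒜 := 𝒜) c b,
      ← Measure.map_map (measurable_shiftMap c) (measurable_shiftMap b), hb, hc]
  have hn : ∀ n : ℕ, μ.map (shiftMap (𝒜 := 𝒜) (n : ℤ)) = μ := by
    intro n
    induction n with
    | zero => rw [Int.natCast_zero, shiftMap_zero, Measure.map_id]
    | succ n ih =>
      have hc : ((n + 1 : ℕ) : ℤ) = (n : ℤ) + 1 := by push_cast; ring
      rw [hc]
      exact hcompose _ _ ih h1
  have hm1 : μ.map (shiftMap (𝒜 := 𝒜) (-1)) = μ := by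
    conv_lhs => rw [← h1]
    rw [Measure.map_map (measurable_shiftMap (-1)) (measurable_shiftMap 1),
      shiftMap_comp, show (1 : ℤ) + -1 = 0 by ring, shiftMap_zero, Measure.map_id]
  have hmn : ∀ n : ℕ, μ.map (shiftMap (𝒜 := 𝒜) (-(n : ℤ))) = μ := by
    intro n
    induction n with
    | zero => rw [show -((0 : ℕ) : ℤ) = 0 by simp, shiftMap_zero, Measure.map_id]
    | succ n ih =>
      have hc : -(((n + 1 : ℕ)) : ℤ) = -(n : ℤ) + -1 := by push_cast; ring
      rw [hc]
      exact hcompose _ _ ih hm1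
  rcases Int.eq_nat_or_neg a with ⟨n, rfl | rfl⟩
  · exact hn n
  · exact hmn n


lemma cylProb1_translate (hinv : TransInv1 μ) (a : ℤ) (Λ : Finset ℤ)
    (x : (Λ.image (· + a) : Finset ℤ) → 𝒜) :
    cylProb1 μ (Λ.image (· + a)) x
      = cylProb1 μ Λ (fun v => x ⟨v.1 + a, Finset.mem_image_of_mem _ v.2⟩) := by
  rw [cylProb1_def, cylProb1_def]
  have hset : cylSet (Λ.image (· + a)) x
      = shiftMap a ⁻¹' cylSet Λ (fun v => x ⟨v.1 + a, Finset.mem_image_of_mem _ v.2⟩) := by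
    ext ω
    constructor
    · intro h v
      exact h ⟨v.1 + a, Finset.mem_image_of_mem _ v.2⟩
    · intro h w
      obtain ⟨v, hv, hva⟩ := Finset.mem_image.mp w.2
      have hw : w = ⟨v + a, Finset.mem_image_of_mem _ hv⟩ := Subtype.ext hva.symm
      rw [hw]
      exact h ⟨v, hv⟩
  rw [hset, ← Measure.map_apply (measurable_shiftMap a) (measurableSet_cylSet _ _),
    map_shiftMap μ hinv a]

noncomputable def imgEquiv (a : ℤ) (Λ : Finset ℤ) :
    ((Λ.image (· + a) : Finset ℤ) → 𝒜) ≃ (Λ → 𝒜) where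
  toFun x := fun v => x ⟨v.1 + a, Finset.mem_image_of_mem _ v.2⟩
  invFun y := fun w => y ⟨w.1 - a, by
    obtain ⟨v, hv, hva⟩ := Finset.mem_image.mp w.2
    rw [← hva]
    simpa using hv⟩
  left_inv x := by
    funext w
    show x ⟨w.1 - a + a, _⟩ = x w
    have h : (⟨w.1 - a + a, by rw [sub_add_cancel]; exact w.2⟩ : {z // z ∈ Λ.image (· + a)}) = w :=
      Subtype.ext (by ring)
    exact congrArg x (Subtype.ext (by ring))
  right_inv y := by
    funext v
    show y ⟨v.1 + a - a, _⟩ = y v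
    exact congrArg y (Subtype.ext (by ring))

lemma entS1_translate (hinv : TransInv1 μ) (a : ℤ) (Λ : Finset ℤ) :
    entS1 μ (Λ.image (· + a)) = entS1 μ Λ := by
  unfold entS1
  congr 1
  refine Fintype.sum_equiv (imgEquiv (𝒜 := 𝒜) a Λ) _ _ fun x => ?_
  rw [cylProb1_translate μ hinv a Λ x]
  rfl

lemma condEnt1_translate (hinv : TransInv1 μ) (a : ℤ) (Λ Λ' : Finset ℤ) (hd : Disjoint Λ Λ') :
    condEnt1 μ (Λ.image (· + a)) (Λ'.image (· + a)) = condEnt1 μ Λ Λ' := by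
  have hdi : Disjoint (Λ.image (· + a)) (Λ'.image (· + a)) :=
    (Finset.disjoint_image (add_left_injective a)).mpr hd
  rw [condEnt1_eq μ hdi, condEnt1_eq μ hd, ← Finset.image_union,
    entS1_translate μ hinv, entS1_translate μ hinv]

lemma condEnt1_singleton_shift (hinv : TransInv1 μ) (c t : ℤ) (S : Finset ℤ)
    (hd : Disjoint {c} S) :
    condEnt1 μ {c + t} (S.image (· + t)) = condEnt1 μ {c} S := by
  have h1 : ({c} : Finset ℤ).image (· + t) = {c + t} := by simp
  rw [← h1, condEnt1_translate μ hinv t {c} S hd]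

lemma entS1_singleton_shift (hinv : TransInv1 μ) (t : ℤ) :
    entS1 (𝒜 := 𝒜) μ {t} = entS1 μ {0} := by
  have h1 : ({0} : Finset ℤ).image (· + t) = {t} := by simp
  rw [← h1, entS1_translate μ hinv t {0}]

/-! ### The chain bound -/

lemma chain (C : ℤ → Finset ℤ) :
    ∀ (l : List ℤ) (Λ₀ : Finset ℤ), l.Nodup → (∀ t ∈ l, t ∉ Λ₀) →
      (∀ (i : ℕ) (hi : i < l.length), C (l.get ⟨i, hi⟩) ⊆ Λ₀ ∪ (l.take i).toFinset) →
      entS1 μ (Λ₀ ∪ l.toFinset) ≤ entS1 μ Λ₀ + (l.map (fun t => condEnt1 μ {t} (C t))).sum := by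
  intro l
  induction l with
  | nil => intro Λ₀ _ _ _; simp
  | cons a l ih =>
    intro Λ₀ hnd hnotin hcond
    have ha0 : a ∉ Λ₀ := hnotin a List.mem_cons_self
    have hal : a ∉ l := (List.nodup_cons.mp hnd).1
    have hCa : C a ⊆ Λ₀ := by
      have h := hcond 0 (by simp)
      simpa using h
    have hstep : entS1 μ (insert a Λ₀) ≤ entS1 μ Λ₀ + condEnt1 μ {a} (C a) :=
      entS1_insert_le μ ha0 hCa
    have hih := ih (insert a Λ₀) (List.nodup_cons.mp hnd).2
      (fun t ht => by
        simp only [Finset.mem_insert, not_or]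
        exact ⟨fun h => hal (h ▸ ht), hnotin t (List.mem_cons_of_mem a ht)⟩)
      (fun i hi => by
        have h := hcond (i + 1) (by simpa using Nat.succ_lt_succ hi)
        have hget : (a :: l).get ⟨i + 1, by simpa using Nat.succ_lt_succ hi⟩ = l.get ⟨i, hi⟩ := rfl
        rw [hget] at h
        refine h.trans (le_of_eq ?_)
        show Λ₀ ∪ ((a :: l).take (i + 1)).toFinset = insert a Λ₀ ∪ (l.take i).toFinset
        rw [List.take_succ_cons, List.toFinset_cons]
        ext t
        simp only [Finset.mem_union, Finset.mem_insert]
        tauto)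
    have hset : Λ₀ ∪ (a :: l).toFinset = (insert a Λ₀) ∪ l.toFinset := by
      rw [List.toFinset_cons]
      ext t
      simp only [Finset.mem_union, Finset.mem_insert]
      tauto
    rw [hset, List.map_cons, List.sum_cons]
    calc entS1 μ (insert a Λ₀ ∪ l.toFinset)
        ≤ entS1 μ (insert a Λ₀) + (l.map (fun t => condEnt1 μ {t} (C t))).sum := hih
      _ ≤ entS1 μ Λ₀ + condEnt1 μ {a} (C a) + (l.map (fun t => condEnt1 μ {t} (C t))).sum := by
          linarith
      _ = _ := by ring

end Trans

/-! ### The hierarchical construction -/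

noncomputable def Vset (L : ℤ) (k : ℕ) : Finset ℤ := (Finset.Ico (0:ℤ) L).filter (fun t => (2:ℤ)^k ∣ t)

open Classical in
noncomputable def Cset (B Bkk : Finset ℤ) (k : ℕ) (L : ℤ) (t : ℤ) : Finset ℤ :=
  if (∀ b ∈ B, 0 ≤ t + b) ∧ (∀ b ∈ Bkk, 0 ≤ t - 2^(k-1) + b ∧ t - 2^(k-1) + b < L)
  then (B.image (· + t)) ∪ (Bkk.image (· + (t - 2^(k-1)))) else ∅

lemma list_range_map_sum (n : ℕ) (g : ℕ → ℝ) :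
    ((List.range n).map g).sum = ∑ j ∈ Finset.range n, g j := by
  induction n with
  | zero => simp
  | succ n ih => rw [List.range_succ, List.map_append, List.sum_append, Finset.sum_range_succ, ih]; simp

lemma idx_nonneg (k : ℕ) (hk : 1 ≤ k) (idx : ℤ) (h : 0 ≤ 2^(k-1) + idx * 2^k) : 0 ≤ idx := by
  by_contra hneg
  push_neg at hneg
  have h1 : idx ≤ -1 := by omega
  have h2 : (2:ℤ)^k = 2^(k-1) * 2 := by
    rw [← pow_succ, Nat.sub_add_cancel hk]
  have h3 : (0:ℤ) < 2^(k-1) := by positivity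
  nlinarith

section Main
variable {𝒜 : Type*} [Fintype 𝒜] [MeasurableSpace 𝒜] [MeasurableSingletonClass 𝒜]
variable (μ : Measure (ℤ → 𝒜)) [IsProbabilityMeasure μ]

set_option maxHeartbeats 2000000 in
lemma phase_step (hinv : TransInv1 μ) (m : ℕ) (B Bkk : Finset ℤ)
    (hB : ∀ b ∈ B, ∃ j : ℤ, j < 0 ∧ b = j * 2^m)
    (k : ℕ) (hk1 : 1 ≤ k) (hkm : k ≤ m)
    (hBkk : ∀ b ∈ Bkk, (∃ j : ℤ, j < 0 ∧ b = 2^(k-1) + j*2^k) ∨ (∃ j : ℤ, b = j * 2^k))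
    (N : ℕ) (D : ℕ)
    (hD1 : ∀ b ∈ B, b.natAbs < D) (hD2 : ∀ b ∈ Bkk, b.natAbs < D) (hD3 : 2^m < D) :
    entS1 μ (Vset ((2:ℤ)^m * N) (k-1)) ≤ entS1 μ (Vset ((2:ℤ)^m * N) k)
      + ((2^(m-k)*N : ℕ) : ℝ) * min (condEnt1 μ {0} B) (condEnt1 μ {(2:ℤ)^(k-1)} Bkk)
      + (4 * D : ℝ) * entS1 μ ({0} : Finset ℤ) := by
  classical
  set L : ℤ := 2^m * N with hLdef
  set ck : ℕ := 2^(m-k)*N with hck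
  set f : ℕ → ℤ := fun j => (2:ℤ)^(k-1) + (j:ℤ) * 2^k with hf
  set lk : List ℤ := (List.range ck).map f with hlk
  set CC : ℤ → Finset ℤ := Cset B Bkk k L with hCC
  set P : ℤ → Prop :=
    fun t => (∀ b ∈ B, 0 ≤ t + b) ∧ (∀ b ∈ Bkk, 0 ≤ t - 2^(k-1) + b ∧ t - 2^(k-1) + b < L)
    with hP
  have h2k1 : (0:ℤ) < 2^(k-1) := by positivity
  have h2k : (0:ℤ) < 2^k := by positivity
  have hpow2 : (2:ℤ)^k = 2^(k-1) * 2 := by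
    rw [← pow_succ, Nat.sub_add_cancel hk1]
  have hpowm : (2:ℤ)^m = 2^(m-k) * 2^k := by rw [← pow_add, Nat.sub_add_cancel hkm]
  have h2mk : (0:ℤ) < 2^(m-k) := by positivity
  have hL : L = (ck : ℤ) * 2^k := by rw [hLdef, hck]; push_cast; rw [hpowm]; ring
  -- basic membership facts
  have hmemlk : ∀ t, t ∈ lk ↔ ∃ j < ck, f j = t := by
    intro t; rw [hlk]; simp [List.mem_map, List.mem_range]
  have hmemVk : ∀ t, t ∈ Vset L k ↔ (0 ≤ t ∧ t < L) ∧ (2:ℤ)^k ∣ t := by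
    intro t; rw [Vset]; simp [Finset.mem_filter, Finset.mem_Ico]
  -- (a) nodup
  have hnodup : lk.Nodup := by
    rw [hlk]
    refine List.Nodup.map ?_ List.nodup_range
    intro j1 j2 h
    have h' : (j1:ℤ) * 2^k = (j2:ℤ) * 2^k := by
      simp only [hf] at h
      linarith
    have := mul_right_cancel₀ (ne_of_gt h2k) h'
    exact_mod_cast this
  -- (b) not in V k
  have hnotin : ∀ t ∈ lk, t ∉ Vset L k := by
    intro t ht hV
    obtain ⟨j, hj, rfl⟩ := (hmemlk _).mp ht
    obtain ⟨⟨h0, hL'⟩, hdvd⟩ := (hmemVk _).mp hV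
    have hdvd2 : (2:ℤ)^k ∣ 2^(k-1) := by
      have : (2:ℤ)^(k-1) = (f j) - (j:ℤ) * 2^k := by rw [hf]; ring
      rw [this]
      exact dvd_sub hdvd ⟨(j:ℤ), by ring⟩
    have hle := Int.le_of_dvd h2k1 hdvd2
    nlinarith
  -- (d) decomposition
  have hdecomp : Vset L (k-1) = Vset L k ∪ lk.toFinset := by
    ext t
    rw [Finset.mem_union, List.mem_toFinset, hmemlk, hmemVk, Vset]
    simp only [Finset.mem_filter, Finset.mem_Ico]
    constructor
    · rintro ⟨⟨h0, hL'⟩, c, hc⟩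
      rcases Int.even_or_odd c with ⟨d, hd⟩ | ⟨d, hd⟩
      · left
        exact ⟨⟨h0, hL'⟩, ⟨d, by rw [hc, hd, hpow2]; ring⟩⟩
      · right
        have htd : t = 2^(k-1) + d * 2^k := by rw [hc, hd, hpow2]; ring
        have hd0 : 0 ≤ d := idx_nonneg k hk1 d (htd ▸ h0)
        have hdck : d < ck := by
          by_contra hge
          push_neg at hge
          have : (ck:ℤ) * 2^k ≤ d * 2^k := mul_le_mul_of_nonneg_right hge (le_of_lt h2k)
          rw [← hL] at this
          nlinarith
        refine ⟨d.toNat, ?_, ?_⟩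
        · omega
        · show (2:ℤ)^(k-1) + (d.toNat : ℤ) * 2^k = t
          have hdd : ((d.toNat : ℤ)) = d := Int.toNat_of_nonneg hd0
          rw [hdd]
          exact htd.symm
    · rintro (⟨⟨h0, hL'⟩, hdvd⟩ | ⟨j, hj, rfl⟩)
      · refine ⟨⟨h0, hL'⟩, dvd_trans (pow_dvd_pow 2 (Nat.sub_le k 1)) hdvd⟩
      · have hfj : f j = 2^(k-1) + (j:ℤ)*2^k := rfl
        have h0 : (0:ℤ) ≤ f j := by rw [hfj]; positivity
        have hfL : f j < L := by
          rw [hfj, hL]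
          have hj' : (j:ℤ) + 1 ≤ (ck:ℤ) := by exact_mod_cast hj
          nlinarith
        exact ⟨⟨h0, hfL⟩, ⟨1 + 2*j, by rw [hfj, hpow2]; ring⟩⟩
  -- t is never in its own conditioning set
  have h2m1 : (1:ℤ) ≤ 2^m := by
    have h := h2k1
    have h' : (0:ℤ) < 2^m := by positivity
    omega
  have hTnotinC : ∀ t : ℤ, t ∉ CC t := by
    intro t hmem
    rw [hCC] at hmem
    simp only [Cset] at hmem
    by_cases hPt : (∀ b ∈ B, 0 ≤ t + b) ∧ (∀ b ∈ Bkk, 0 ≤ t - 2^(k-1) + b ∧ t - 2^(k-1) + b < L)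
    · rw [if_pos hPt] at hmem
      rcases Finset.mem_union.mp hmem with hmem | hmem
      · obtain ⟨b, hb, hbe⟩ := Finset.mem_image.mp hmem
        obtain ⟨jb, hjb, rfl⟩ := hB b hb
        have hb0 : jb * 2^m = 0 := by
          have : jb * 2^m + t = t := hbe
          linarith
        nlinarith
      · obtain ⟨b, hb, hbe⟩ := Finset.mem_image.mp hmem
        have hbv : b = 2^(k-1) := by
          have : b + (t - 2^(k-1)) = t := hbe
          linarith
        rcases hBkk b hb with ⟨jb, hjb, hbeq⟩ | ⟨jb, hbeq⟩
        · rw [hbv] at hbeq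
          have : jb * 2^k = 0 := by linarith
          nlinarith
        · rw [hbv, hpow2] at hbeq
          have h1 : (2:ℤ)^(k-1) * 1 = 2^(k-1) * (2 * jb) := by linarith
          have h2 := mul_left_cancel₀ (ne_of_gt h2k1) h1
          omega
    · rw [if_neg hPt] at hmem
      exact absurd hmem (Finset.notMem_empty _)
  -- the chain condition
  have hlen : lk.length = ck := by
    show (List.map f (List.range ck)).length = ck
    simp
  have hcond : ∀ (i : ℕ) (hi : i < lk.length),
      CC (lk.get ⟨i, hi⟩) ⊆ Vset L k ∪ (lk.take i).toFinset := by
    intro i hi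
    have hick : i < ck := hlen ▸ hi
    have hget : lk.get ⟨i, hi⟩ = f i := by
      show (List.map f (List.range ck)).get ⟨i, hi⟩ = f i
      simp
    rw [hget]
    have htake : ∀ t, t ∈ (lk.take i).toFinset ↔ ∃ j < i, f j = t := by
      intro t
      rw [hlk, ← List.map_take, List.take_range, min_eq_left (le_of_lt hick)]
      simp [List.mem_map, List.mem_range]
    by_cases hPt : (∀ b ∈ B, 0 ≤ f i + b) ∧
        (∀ b ∈ Bkk, 0 ≤ f i - 2^(k-1) + b ∧ f i - 2^(k-1) + b < L)
    · rw [hCC]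
      simp only [Cset]
      rw [if_pos hPt]
      intro c hc
      rw [Finset.mem_union] at hc ⊢
      rcases hc with hc | hc
      · obtain ⟨b, hb, rfl⟩ := Finset.mem_image.mp hc
        obtain ⟨jb, hjb, rfl⟩ := hB b hb
        right
        rw [htake]
        set idx : ℤ := (i:ℤ) + jb * 2^(m-k) with hidx
        have hceq : jb * 2^m + f i = 2^(k-1) + idx * 2^k := by
          show jb * 2^m + (2^(k-1) + (i:ℤ) * 2^k) = _
          rw [hpowm, hidx]; ring
        have hc0 : (0:ℤ) ≤ jb * 2^m + f i := by
          have := hPt.1 _ hb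
          linarith
        have hidx0 : 0 ≤ idx := idx_nonneg k hk1 idx (by rw [← hceq]; linarith)
        have hidxi : idx < (i:ℤ) := by
          have hneg : jb * 2^(m-k) ≤ -1 := by nlinarith
          rw [hidx]; linarith
        refine ⟨idx.toNat, by omega, ?_⟩
        show (2:ℤ)^(k-1) + (idx.toNat : ℤ) * 2^k = jb * 2^m + f i
        rw [Int.toNat_of_nonneg hidx0]
        exact hceq.symm
      · obtain ⟨b, hb, rfl⟩ := Finset.mem_image.mp hc
        rcases hBkk b hb with ⟨jb, hjb, rfl⟩ | ⟨jb, rfl⟩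
        · right
          rw [htake]
          set idx : ℤ := (i:ℤ) + jb with hidx
          have hceq : (2^(k-1) + jb * 2^k) + (f i - 2^(k-1)) = 2^(k-1) + idx * 2^k := by
            show _ + ((2^(k-1) + (i:ℤ) * 2^k) - 2^(k-1)) = _
            rw [hidx]; ring
          have hc0 := (hPt.2 _ hb).1
          have hidx0 : 0 ≤ idx := idx_nonneg k hk1 idx (by rw [← hceq]; linarith)
          have hidxi : idx < (i:ℤ) := by rw [hidx]; linarith
          refine ⟨idx.toNat, by omega, ?_⟩
          show (2:ℤ)^(k-1) + (idx.toNat : ℤ) * 2^k = (2^(k-1) + jb * 2^k) + (f i - 2^(k-1))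
          rw [Int.toNat_of_nonneg hidx0]
          exact hceq.symm
        · left
          rw [hmemVk]
          have h1 := hPt.2 _ hb
          refine ⟨⟨by linarith [h1.1], by linarith [h1.2]⟩, ⟨jb + i, ?_⟩⟩
          show jb * 2^k + ((2^(k-1) + (i:ℤ) * 2^k) - 2^(k-1)) = 2^k * (jb + i)
          ring
    · rw [hCC]
      simp only [Cset]
      rw [if_neg hPt]
      exact Finset.empty_subset _
  -- apply the chain lemma
  have hchain := chain μ CC lk (Vset L k) hnodup hnotin hcond
  rw [← hdecomp] at hchain
  -- per-term bounds
  set SB : ℝ := condEnt1 μ {0} B with hSB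
  set SBk : ℝ := condEnt1 μ {(2:ℤ)^(k-1)} Bkk with hSBk
  set KK : ℝ := entS1 μ ({0} : Finset ℤ) with hKK
  have hd0B : Disjoint ({0} : Finset ℤ) B := by
    rw [Finset.disjoint_left]
    intro x hx hxB
    rw [Finset.mem_singleton] at hx
    subst hx
    obtain ⟨jb, hjb, hjb2⟩ := hB 0 hxB
    nlinarith
  have hd0Bk : Disjoint ({(2:ℤ)^(k-1)} : Finset ℤ) Bkk := by
    rw [Finset.disjoint_left]
    intro x hx hxB
    rw [Finset.mem_singleton] at hx
    subst hx
    rcases hBkk _ hxB with ⟨jb, hjb, hbeq⟩ | ⟨jb, hbeq⟩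
    · have : jb * 2^k = 0 := by linarith
      nlinarith
    · rw [hpow2] at hbeq
      have h1 : (2:ℤ)^(k-1) * 1 = 2^(k-1) * (2 * jb) := by linarith
      have h2 := mul_left_cancel₀ (ne_of_gt h2k1) h1
      omega
  have htransB : ∀ t : ℤ, condEnt1 μ {t} (B.image (· + t)) = SB := by
    intro t
    have h := condEnt1_singleton_shift μ hinv 0 t B hd0B
    rw [zero_add] at h
    rw [h, hSB]
  have htransBk : ∀ t : ℤ, condEnt1 μ {t} (Bkk.image (· + (t - 2^(k-1)))) = SBk := by
    intro t
    have h := condEnt1_singleton_shift μ hinv (2^(k-1)) (t - 2^(k-1)) Bkk hd0Bk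
    rw [show (2:ℤ)^(k-1) + (t - 2^(k-1)) = t by ring] at h
    rw [h, hSBk]
  have hKt : ∀ t : ℤ, condEnt1 μ {t} (∅ : Finset ℤ) = KK := by
    intro t
    rw [condEnt1_empty_right, entS1_singleton_shift μ hinv t, hKK]
  have hmin0 : 0 ≤ min SB SBk := le_min (condEnt1_nonneg μ _ _) (condEnt1_nonneg μ _ _)
  have hKK0 : 0 ≤ KK := entS1_nonneg μ _
  have hterm : ∀ t : ℤ, condEnt1 μ {t} (CC t) ≤ min SB SBk +
      (if (∀ b ∈ B, 0 ≤ t + b) ∧ (∀ b ∈ Bkk, 0 ≤ t - 2^(k-1) + b ∧ t - 2^(k-1) + b < L)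
        then 0 else KK) := by
    intro t
    by_cases hPt : (∀ b ∈ B, 0 ≤ t + b) ∧
        (∀ b ∈ Bkk, 0 ≤ t - 2^(k-1) + b ∧ t - 2^(k-1) + b < L)
    · rw [if_pos hPt, add_zero]
      have hCCt : CC t = (B.image (· + t)) ∪ (Bkk.image (· + (t - 2^(k-1)))) := by
        rw [hCC]; simp only [Cset]; rw [if_pos hPt]
      have hdisj : Disjoint ({t} : Finset ℤ) (CC t) := by
        rw [Finset.disjoint_left]
        intro x hx
        rw [Finset.mem_singleton] at hx
        subst hx
        exact hTnotinC _
      have h1 : condEnt1 μ {t} (CC t) ≤ SB := by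
        have h := condEnt1_mono (Λ' := B.image (· + t)) μ hdisj
          (by rw [hCCt]; exact Finset.subset_union_left)
        rwa [htransB t] at h
      have h2 : condEnt1 μ {t} (CC t) ≤ SBk := by
        have h := condEnt1_mono (Λ' := Bkk.image (· + (t - 2^(k-1)))) μ hdisj
          (by rw [hCCt]; exact Finset.subset_union_right)
        rwa [htransBk t] at h
      exact le_min h1 h2
    · rw [if_neg hPt]
      have hCCt : CC t = ∅ := by rw [hCC]; simp only [Cset]; rw [if_neg hPt]
      rw [hCCt, hKt t]
      linarith
  -- counting the boundary terms
  have hDpos : 1 ≤ D := by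
    have := hD3
    have h' : 0 < 2^m := pow_pos (by norm_num) m
    omega
  have himp : ∀ j : ℕ, j < ck →
      ¬ ((∀ b ∈ B, 0 ≤ f j + b) ∧ (∀ b ∈ Bkk, 0 ≤ f j - 2^(k-1) + b ∧ f j - 2^(k-1) + b < L)) →
      (j < 2*D ∨ ck ≤ j + 2*D) := by
    intro j hj hnP
    have hfj : f j = 2^(k-1) + (j:ℤ) * 2^k := rfl
    have hj2k : (j:ℤ) ≤ (j:ℤ) * 2^k := by nlinarith [Int.natCast_nonneg j]
    have h12k : (1:ℤ) ≤ 2^k := h2k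
    have h2km : (2:ℤ)^(k-1) ≤ 2^m := pow_le_pow_right₀ (by norm_num) (by omega)
    rcases not_and_or.mp hnP with hA | hA
    · push_neg at hA
      obtain ⟨b, hb, hlt⟩ := hA
      have habs : -b ≤ (D:ℤ) := by
        have h1 : (b.natAbs : ℤ) < (D:ℤ) := by exact_mod_cast hD1 b hb
        have h2 : -b ≤ |b| := neg_le_abs b
        rw [Int.abs_eq_natAbs] at h2
        linarith
      left
      have : (j:ℤ) < 2*(D:ℤ) := by linarith [hlt]
      exact_mod_cast this
    · push_neg at hA
      obtain ⟨b, hb, hor⟩ := hA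
      have habs : -b ≤ (D:ℤ) ∧ b ≤ (D:ℤ) := by
        have h1 : (b.natAbs : ℤ) < (D:ℤ) := by exact_mod_cast hD2 b hb
        have h2 : -b ≤ |b| := neg_le_abs b
        have h3 : b ≤ |b| := le_abs_self b
        rw [Int.abs_eq_natAbs] at h2 h3
        constructor <;> linarith
      by_cases hx : 0 ≤ f j - 2^(k-1) + b
      · -- then the failure is on the right end
        have hge := hor hx
        right
        by_contra hcon
        push_neg at hcon
        have hjck : (j:ℤ) + 1 + 2*D ≤ (ck:ℤ) := by
          have : j + 2*D < ck := hcon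
          omega
        have h1 : ((j:ℤ) + 1) * 2^k ≤ ((ck:ℤ) - 2*D) * 2^k := by
          apply mul_le_mul_of_nonneg_right _ (le_of_lt h2k)
          linarith
        have h2 : ((ck:ℤ) - 2*D) * 2^k = L - 2*D*2^k := by rw [hL]; ring
        have h3 : (D:ℤ)*1 ≤ (D:ℤ)*2^k := by
          apply mul_le_mul_of_nonneg_left h12k (Int.natCast_nonneg D)
        have hDz : (1:ℤ) ≤ (D:ℤ) := by exact_mod_cast hDpos
        nlinarith
      · push_neg at hx
        left
        have hD3' : (2:ℤ)^m < (D:ℤ) := by exact_mod_cast hD3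
        have : (j:ℤ) < 2*(D:ℤ) := by linarith
        exact_mod_cast this
  have hcard : ((Finset.range ck).filter (fun j =>
      ¬ ((∀ b ∈ B, 0 ≤ f j + b) ∧
        (∀ b ∈ Bkk, 0 ≤ f j - 2^(k-1) + b ∧ f j - 2^(k-1) + b < L)))).card ≤ 4 * D := by
    have hsub : ((Finset.range ck).filter (fun j =>
        ¬ ((∀ b ∈ B, 0 ≤ f j + b) ∧
          (∀ b ∈ Bkk, 0 ≤ f j - 2^(k-1) + b ∧ f j - 2^(k-1) + b < L)))) ⊆
        ((Finset.range ck).filter (fun j => j < 2*D)) ∪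
          ((Finset.range ck).filter (fun j => ck ≤ j + 2*D)) := by
      intro j hj
      rw [Finset.mem_filter, Finset.mem_range] at hj
      rcases himp j hj.1 hj.2 with h | h
      · exact Finset.mem_union_left _ (Finset.mem_filter.mpr ⟨Finset.mem_range.mpr hj.1, h⟩)
      · exact Finset.mem_union_right _ (Finset.mem_filter.mpr ⟨Finset.mem_range.mpr hj.1, h⟩)
    have h1 : ((Finset.range ck).filter (fun j => j < 2*D)).card ≤ 2*D := by
      have : ((Finset.range ck).filter (fun j => j < 2*D)) ⊆ Finset.range (2*D) := by
        intro j hj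
        rw [Finset.mem_filter] at hj
        exact Finset.mem_range.mpr hj.2
      calc _ ≤ (Finset.range (2*D)).card := Finset.card_le_card this
        _ = 2*D := Finset.card_range _
    have h2 : ((Finset.range ck).filter (fun j => ck ≤ j + 2*D)).card ≤ 2*D := by
      have : ((Finset.range ck).filter (fun j => ck ≤ j + 2*D)) ⊆ Finset.Ico (ck - 2*D) ck := by
        intro j hj
        rw [Finset.mem_filter, Finset.mem_range] at hj
        rw [Finset.mem_Ico]
        omega
      calc _ ≤ (Finset.Ico (ck - 2*D) ck).card := Finset.card_le_card this
        _ = ck - (ck - 2*D) := Nat.card_Ico _ _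
        _ ≤ 2*D := by omega
    calc _ ≤ _ := Finset.card_le_card hsub
      _ ≤ _ := Finset.card_union_le _ _
      _ ≤ 4 * D := by omega
  -- summation
  have hmapsum : (lk.map (fun t => condEnt1 μ {t} (CC t))).sum
      = ∑ j ∈ Finset.range ck, condEnt1 μ {f j} (CC (f j)) := by
    rw [hlk, List.map_map, list_range_map_sum]
    exact Finset.sum_congr rfl fun j _ => rfl
  have hsumbound : ∑ j ∈ Finset.range ck, condEnt1 μ {f j} (CC (f j))
      ≤ (ck : ℝ) * min SB SBk + (4*D : ℝ) * KK := by
    calc ∑ j ∈ Finset.range ck, condEnt1 μ {f j} (CC (f j))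
        ≤ ∑ j ∈ Finset.range ck, (min SB SBk +
            (if (∀ b ∈ B, 0 ≤ f j + b) ∧
              (∀ b ∈ Bkk, 0 ≤ f j - 2^(k-1) + b ∧ f j - 2^(k-1) + b < L)
              then 0 else KK)) := Finset.sum_le_sum (fun j _ => hterm (f j))
      _ = (ck : ℝ) * min SB SBk + ∑ j ∈ Finset.range ck,
            (if (∀ b ∈ B, 0 ≤ f j + b) ∧
              (∀ b ∈ Bkk, 0 ≤ f j - 2^(k-1) + b ∧ f j - 2^(k-1) + b < L)
              then (0:ℝ) else KK) := by
          rw [Finset.sum_add_distrib, Finset.sum_const, Finset.card_range, nsmul_eq_mul]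
      _ ≤ (ck : ℝ) * min SB SBk + (4*D : ℝ) * KK := by
          have hsit : ∑ j ∈ Finset.range ck,
              (if (∀ b ∈ B, 0 ≤ f j + b) ∧
                (∀ b ∈ Bkk, 0 ≤ f j - 2^(k-1) + b ∧ f j - 2^(k-1) + b < L)
                then (0:ℝ) else KK)
              ≤ (4*D : ℝ) * KK := by
            rw [Finset.sum_ite, Finset.sum_const, Finset.sum_const, smul_zero, zero_add,
              nsmul_eq_mul]
            have hcc : (((Finset.range ck).filter (fun j =>
                ¬ ((∀ b ∈ B, 0 ≤ f j + b) ∧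
                  (∀ b ∈ Bkk, 0 ≤ f j - 2^(k-1) + b ∧ f j - 2^(k-1) + b < L)))).card : ℝ)
                ≤ (4*D : ℝ) := by
              have := hcard
              calc _ ≤ ((4*D : ℕ) : ℝ) := by exact_mod_cast this
                _ = (4*D : ℝ) := by push_cast; ring
            exact mul_le_mul_of_nonneg_right hcc hKK0
          linarith
  rw [hmapsum] at hchain
  calc entS1 μ (Vset L (k-1)) ≤ entS1 μ (Vset L k)
        + ∑ j ∈ Finset.range ck, condEnt1 μ {f j} (CC (f j)) := hchain
    _ ≤ _ := by
        rw [hSB, hSBk, hKK] at hsumbound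
        have hckc : ((ck:ℕ):ℝ) = ((2^(m-k)*N : ℕ) : ℝ) := by rw [hck]
        rw [hckc] at hsumbound
        linarith


set_option maxHeartbeats 2000000 in
lemma phase_zero (hinv : TransInv1 μ) (m : ℕ) (B : Finset ℤ)
    (hB : ∀ b ∈ B, ∃ j : ℤ, j < 0 ∧ b = j * 2^m)
    (N : ℕ) (D : ℕ) (hD1 : ∀ b ∈ B, b.natAbs < D) :
    entS1 μ (Vset ((2:ℤ)^m * N) m) ≤ (N : ℝ) * condEnt1 μ {0} B
      + (4 * D : ℝ) * entS1 μ ({0} : Finset ℤ) := by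
  classical
  set L : ℤ := 2^m * N with hLdef
  set f : ℕ → ℤ := fun j => (j:ℤ) * 2^m with hf
  set lk : List ℤ := (List.range N).map f with hlk
  set CC : ℤ → Finset ℤ := fun t => if (∀ b ∈ B, 0 ≤ t + b) then B.image (· + t) else ∅ with hCC
  have h2m : (0:ℤ) < 2^m := by positivity
  have hmemlk : ∀ t, t ∈ lk ↔ ∃ j < N, f j = t := by
    intro t; rw [hlk]; simp [List.mem_map, List.mem_range]
  have hmemVm : ∀ t, t ∈ Vset L m ↔ (0 ≤ t ∧ t < L) ∧ (2:ℤ)^m ∣ t := by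
    intro t; rw [Vset]; simp [Finset.mem_filter, Finset.mem_Ico]
  have hnodup : lk.Nodup := by
    rw [hlk]
    refine List.Nodup.map ?_ List.nodup_range
    intro j1 j2 h
    have h' : (j1:ℤ) * 2^m = (j2:ℤ) * 2^m := h
    have := mul_right_cancel₀ (ne_of_gt h2m) h'
    exact_mod_cast this
  have hdecomp : Vset L m = lk.toFinset := by
    ext t
    rw [List.mem_toFinset, hmemlk, hmemVm]
    constructor
    · rintro ⟨⟨h0, hL'⟩, c, hc⟩
      have hc0 : 0 ≤ c := by nlinarith
      have hcN : c < (N:ℤ) := by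
        by_contra hge
        push_neg at hge
        have : (2:ℤ)^m * (N:ℤ) ≤ 2^m * c := by nlinarith
        rw [hLdef] at hL'
        nlinarith
      refine ⟨c.toNat, by omega, ?_⟩
      show ((c.toNat : ℤ)) * 2^m = t
      rw [Int.toNat_of_nonneg hc0, hc]
      ring
    · rintro ⟨j, hj, rfl⟩
      have hfj : f j = (j:ℤ) * 2^m := rfl
      have h0 : (0:ℤ) ≤ f j := by rw [hfj]; positivity
      have hfL : f j < L := by
        rw [hfj, hLdef]
        have hj' : (j:ℤ) < (N:ℤ) := by exact_mod_cast hj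
        nlinarith
      exact ⟨⟨h0, hfL⟩, ⟨j, by rw [hfj]; ring⟩⟩
  have hTnotinC : ∀ t : ℤ, t ∉ CC t := by
    intro t hmem
    simp only [hCC] at hmem
    by_cases hPt : (∀ b ∈ B, 0 ≤ t + b)
    · rw [if_pos hPt] at hmem
      obtain ⟨b, hb, hbe⟩ := Finset.mem_image.mp hmem
      obtain ⟨jb, hjb, rfl⟩ := hB b hb
      have hb0 : jb * 2^m = 0 := by
        have : jb * 2^m + t = t := hbe
        linarith
      nlinarith
    · rw [if_neg hPt] at hmem
      exact absurd hmem (Finset.notMem_empty _)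
  have hlen : lk.length = N := by
    show (List.map f (List.range N)).length = N
    simp
  have hcond : ∀ (i : ℕ) (hi : i < lk.length),
      CC (lk.get ⟨i, hi⟩) ⊆ (∅ : Finset ℤ) ∪ (lk.take i).toFinset := by
    intro i hi
    have hick : i < N := hlen ▸ hi
    have hget : lk.get ⟨i, hi⟩ = f i := by
      show (List.map f (List.range N)).get ⟨i, hi⟩ = f i
      simp
    rw [hget]
    have htake : ∀ t, t ∈ (lk.take i).toFinset ↔ ∃ j < i, f j = t := by
      intro t
      rw [hlk, ← List.map_take, List.take_range, min_eq_left (le_of_lt hick)]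
      simp [List.mem_map, List.mem_range]
    by_cases hPt : (∀ b ∈ B, 0 ≤ f i + b)
    · simp only [hCC]
      rw [if_pos hPt]
      intro c hc
      rw [Finset.mem_union]
      right
      rw [htake]
      obtain ⟨b, hb, rfl⟩ := Finset.mem_image.mp hc
      obtain ⟨jb, hjb, rfl⟩ := hB b hb
      set idx : ℤ := (i:ℤ) + jb with hidx
      have hceq : jb * 2^m + f i = idx * 2^m := by
        show jb * 2^m + (i:ℤ) * 2^m = _
        rw [hidx]; ring
      have hc0 : (0:ℤ) ≤ jb * 2^m + f i := by
        have := hPt _ hb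
        linarith
      have hidx0 : 0 ≤ idx := by
        by_contra hneg
        push_neg at hneg
        have h1 : idx ≤ -1 := by omega
        nlinarith
      have hidxi : idx < (i:ℤ) := by rw [hidx]; linarith
      refine ⟨idx.toNat, by omega, ?_⟩
      show ((idx.toNat : ℤ)) * 2^m = jb * 2^m + f i
      rw [Int.toNat_of_nonneg hidx0]
      exact hceq.symm
    · simp only [hCC]
      rw [if_neg hPt]
      exact Finset.empty_subset _
  have hnotin : ∀ t ∈ lk, t ∉ (∅ : Finset ℤ) := fun t _ => Finset.notMem_empty t
  have hchain := chain μ CC lk ∅ hnodup hnotin hcond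
  rw [Finset.empty_union, ← hdecomp, entS1_empty, zero_add] at hchain
  set SB : ℝ := condEnt1 μ {0} B with hSB
  set KK : ℝ := entS1 μ ({0} : Finset ℤ) with hKK
  have hd0B : Disjoint ({0} : Finset ℤ) B := by
    rw [Finset.disjoint_left]
    intro x hx hxB
    rw [Finset.mem_singleton] at hx
    subst hx
    obtain ⟨jb, hjb, hjb2⟩ := hB 0 hxB
    nlinarith
  have htransB : ∀ t : ℤ, condEnt1 μ {t} (B.image (· + t)) = SB := by
    intro t
    have h := condEnt1_singleton_shift μ hinv 0 t B hd0B
    rw [zero_add] at h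
    rw [h, hSB]
  have hKt : ∀ t : ℤ, condEnt1 μ {t} (∅ : Finset ℤ) = KK := by
    intro t
    rw [condEnt1_empty_right, entS1_singleton_shift μ hinv t, hKK]
  have hSB0 : 0 ≤ SB := condEnt1_nonneg μ _ _
  have hKK0 : 0 ≤ KK := entS1_nonneg μ _
  have hterm : ∀ t : ℤ, condEnt1 μ {t} (CC t) ≤ SB + (if (∀ b ∈ B, 0 ≤ t + b) then 0 else KK) := by
    intro t
    by_cases hPt : (∀ b ∈ B, 0 ≤ t + b)
    · rw [if_pos hPt, add_zero]
      have hCCt : CC t = B.image (· + t) := by simp only [hCC]; rw [if_pos hPt]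
      rw [hCCt, htransB t]
    · rw [if_neg hPt]
      have hCCt : CC t = ∅ := by simp only [hCC]; rw [if_neg hPt]
      rw [hCCt, hKt t]
      linarith
  have himp : ∀ j : ℕ, ¬ (∀ b ∈ B, 0 ≤ f j + b) → j < D := by
    intro j hnP
    push_neg at hnP
    obtain ⟨b, hb, hlt⟩ := hnP
    have habs : -b ≤ (D:ℤ) := by
      have h1 : (b.natAbs : ℤ) < (D:ℤ) := by exact_mod_cast hD1 b hb
      have h2 : -b ≤ |b| := neg_le_abs b
      rw [Int.abs_eq_natAbs] at h2
      linarith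
    have hfj : f j = (j:ℤ) * 2^m := rfl
    have hj2k : (j:ℤ) ≤ (j:ℤ) * 2^m := by nlinarith [Int.natCast_nonneg j]
    have : (j:ℤ) < (D:ℤ) := by
      rw [hfj] at hlt
      linarith
    exact_mod_cast this
  have hcard : ((Finset.range N).filter (fun j => ¬ (∀ b ∈ B, 0 ≤ f j + b))).card ≤ 4*D := by
    have hsub2 : ((Finset.range N).filter (fun j => ¬ (∀ b ∈ B, 0 ≤ f j + b)))
        ⊆ Finset.range D := by
      intro j hj
      rw [Finset.mem_filter] at hj
      exact Finset.mem_range.mpr (himp j hj.2)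
    calc _ ≤ (Finset.range D).card := Finset.card_le_card hsub2
      _ = D := Finset.card_range _
      _ ≤ 4*D := by omega
  have hmapsum : (lk.map (fun t => condEnt1 μ {t} (CC t))).sum
      = ∑ j ∈ Finset.range N, condEnt1 μ {f j} (CC (f j)) := by
    rw [hlk, List.map_map, list_range_map_sum]
    exact Finset.sum_congr rfl fun j _ => rfl
  rw [hmapsum] at hchain
  calc entS1 μ (Vset L m) ≤ _ := hchain
    _ ≤ ∑ j ∈ Finset.range N, (SB + (if (∀ b ∈ B, 0 ≤ f j + b) then 0 else KK)) :=
        Finset.sum_le_sum (fun j _ => hterm (f j))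
    _ = (N : ℝ) * SB + ∑ j ∈ Finset.range N, (if (∀ b ∈ B, 0 ≤ f j + b) then (0:ℝ) else KK) := by
        rw [Finset.sum_add_distrib, Finset.sum_const, Finset.card_range, nsmul_eq_mul]
    _ ≤ (N : ℝ) * SB + (4*D : ℝ) * KK := by
        have hsit : ∑ j ∈ Finset.range N, (if (∀ b ∈ B, 0 ≤ f j + b) then (0:ℝ) else KK)
            ≤ (4*D : ℝ) * KK := by
          rw [Finset.sum_ite, Finset.sum_const, Finset.sum_const, smul_zero, zero_add,
            nsmul_eq_mul]
          have hcc : (((Finset.range N).filter (fun j => ¬ (∀ b ∈ B, 0 ≤ f j + b))).card : ℝ)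
              ≤ (4*D : ℝ) := by
            calc _ ≤ ((4*D : ℕ) : ℝ) := by exact_mod_cast hcard
              _ = (4*D : ℝ) := by push_cast; ring
          exact mul_le_mul_of_nonneg_right hcc hKK0
        linarith


set_option maxHeartbeats 1000000 in
lemma window (hinv : TransInv1 μ) (m : ℕ) (B : Finset ℤ)
    (hB : ∀ b ∈ B, ∃ j : ℤ, j < 0 ∧ b = j * 2^m)
    (Bk : ℕ → Finset ℤ)
    (hBk : ∀ k, 1 ≤ k → k ≤ m → ∀ b ∈ Bk k,
      (∃ j : ℤ, j < 0 ∧ b = 2^(k-1) + j*2^k) ∨ (∃ j : ℤ, b = j * 2^k))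
    (N D : ℕ) (hD1 : ∀ b ∈ B, b.natAbs < D)
    (hD2 : ∀ k, 1 ≤ k → k ≤ m → ∀ b ∈ Bk k, b.natAbs < D) (hD3 : 2^m < D) :
    entS1 μ (Finset.Ico (0:ℤ) ((2:ℤ)^m * N)) ≤ (N : ℝ) * condEnt1 μ {0} B
      + (∑ k ∈ Finset.Icc 1 m, ((2^(m-k)*N : ℕ):ℝ) *
          min (condEnt1 μ {0} B) (condEnt1 μ {(2:ℤ)^(k-1)} (Bk k)))
      + ((m:ℝ)+1) * ((4*D : ℝ) * entS1 μ ({0} : Finset ℤ)) := by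
  classical
  set L : ℤ := 2^m * N with hLdef
  set SB : ℝ := condEnt1 μ {0} B with hSB
  set KK : ℝ := entS1 μ ({0} : Finset ℤ) with hKK
  have hV0 : Vset L 0 = Finset.Ico (0:ℤ) L := by
    rw [Vset]
    refine Finset.filter_true_of_mem fun x _ => ?_
    simpa using one_dvd x
  have htel : ∀ j : ℕ, j ≤ m → entS1 μ (Vset L (m - j)) ≤ entS1 μ (Vset L m)
      + ∑ k ∈ Finset.Icc (m - j + 1) m,
          (((2^(m-k)*N : ℕ):ℝ) * min SB (condEnt1 μ {(2:ℤ)^(k-1)} (Bk k)) + (4*D:ℝ)*KK) := by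
    intro j
    induction j with
    | zero =>
      intro _
      rw [Nat.sub_zero, Finset.Icc_eq_empty (by omega), Finset.sum_empty, add_zero]
    | succ j ih =>
      intro hj1
      have hk1 : 1 ≤ m - j := by omega
      have hkm : m - j ≤ m := by omega
      have hstep := phase_step μ hinv m B (Bk (m - j)) hB (m - j) hk1 hkm
        (hBk (m-j) hk1 hkm) N D hD1 (hD2 (m-j) hk1 hkm) hD3
      have hmj : m - (j+1) = (m - j) - 1 := by omega
      rw [hmj]
      have hIcc : Finset.Icc (m - j - 1 + 1) m = insert (m - j) (Finset.Icc (m - j + 1) m) := by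
        ext x
        simp only [Finset.mem_Icc, Finset.mem_insert]
        omega
      rw [hIcc, Finset.sum_insert (by simp only [Finset.mem_Icc]; omega)]
      have hih := ih (by omega)
      rw [hSB] at *
      linarith
  have hfinal := htel m (le_refl m)
  rw [Nat.sub_self] at hfinal
  have hzero := phase_zero μ hinv m B hB N D hD1
  have hsplit : ∑ k ∈ Finset.Icc 1 m,
      (((2^(m-k)*N : ℕ):ℝ) * min SB (condEnt1 μ {(2:ℤ)^(k-1)} (Bk k)) + (4*D:ℝ)*KK)
      = (∑ k ∈ Finset.Icc 1 m,
          ((2^(m-k)*N : ℕ):ℝ) * min SB (condEnt1 μ {(2:ℤ)^(k-1)} (Bk k)))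
        + (m:ℝ) * ((4*D:ℝ)*KK) := by
    rw [Finset.sum_add_distrib, Finset.sum_const, Nat.card_Icc, nsmul_eq_mul]
    norm_num
  rw [hsplit] at hfinal
  rw [← hV0]
  rw [← hSB, ← hKK] at *
  have h01 : Finset.Icc (0+1) m = Finset.Icc 1 m := by norm_num
  rw [h01] at hfinal
  linarith

end Main

end EntAux

/-- strengthened finite-window upper bound. For a translation invariant
probability measure `μ` on `𝒜^ℤ`, `m ≥ 1`, any finite `B ⊆ G_m^-` and, for `1 ≤ k ≤ m`,
any finite `B_k ⊆ ({2^{k−1}} + G_k^-) ∪ G_k`, the entropy density satisfies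
`s_μ ≤ (1/2^m)·S({0} | B) + Σ_{k=1}^m (1/2^k)·min(S({0} | B), S({2^{k−1}} | B_k))`. -/
theorem entropy_density_hierarchical_upper_bound_min {𝒜 : Type*} [Fintype 𝒜] [Nonempty 𝒜]
    [MeasurableSpace 𝒜] [MeasurableSingletonClass 𝒜]
    (μ : Measure (ℤ → 𝒜)) [IsProbabilityMeasure μ] (hinv : TransInv1 μ)
    (m : ℕ) (hm : 1 ≤ m)
    (B : Finset ℤ) (hB : (↑B : Set ℤ) ⊆ {x : ℤ | ∃ j : ℤ, j < 0 ∧ x = j * 2 ^ m})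
    (Bk : ℕ → Finset ℤ)
    (hBk : ∀ k, 1 ≤ k → k ≤ m →
      (↑(Bk k) : Set ℤ) ⊆
        ({x : ℤ | ∃ j : ℤ, j < 0 ∧ x = 2 ^ (k - 1) + j * 2 ^ k} ∪
          {x : ℤ | ∃ j : ℤ, x = j * 2 ^ k})) :
    ∃ s : ℝ,
      Filter.Tendsto (fun n : ℕ => entS1 μ (Finset.Ico (0 : ℤ) (n : ℤ)) / (n : ℝ))
        Filter.atTop (nhds s) ∧
      s ≤ (1 / 2 ^ m) * condEnt1 μ {0} B +
        ∑ k ∈ Finset.Icc 1 m, (1 / 2 ^ k : ℝ) *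
          min (condEnt1 μ {0} B) (condEnt1 μ {(2 : ℤ) ^ (k - 1)} (Bk k)) := by
  classical
  have hB' : ∀ b ∈ B, ∃ j : ℤ, j < 0 ∧ b = j * 2^m := fun b hb => hB hb
  have hBk' : ∀ k, 1 ≤ k → k ≤ m → ∀ b ∈ Bk k,
      (∃ j : ℤ, j < 0 ∧ b = 2^(k-1) + j*2^k) ∨ (∃ j : ℤ, b = j * 2^k) := by
    intro k h1 h2 b hb
    rcases hBk k h1 h2 hb with h | h
    · exact Or.inl h
    · exact Or.inr h
  set D : ℕ := (B ∪ (Finset.Icc 1 m).biUnion Bk).sup (fun b => b.natAbs) + 2^m + 1 with hDdef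
  have hD1 : ∀ b ∈ B, b.natAbs < D := by
    intro b hb
    have h : b.natAbs ≤ (B ∪ (Finset.Icc 1 m).biUnion Bk).sup (fun b => b.natAbs) :=
      Finset.le_sup (Finset.mem_union_left ((Finset.Icc 1 m).biUnion Bk) hb)
    have h2 : 0 < 2^m := pow_pos (by norm_num) m
    omega
  have hD2 : ∀ k, 1 ≤ k → k ≤ m → ∀ b ∈ Bk k, b.natAbs < D := by
    intro k h1 h2 b hb
    have hmem : b ∈ B ∪ (Finset.Icc 1 m).biUnion Bk :=
      Finset.mem_union_right _ (Finset.mem_biUnion.mpr ⟨k, Finset.mem_Icc.mpr ⟨h1, h2⟩, hb⟩)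
    have h : b.natAbs ≤ (B ∪ (Finset.Icc 1 m).biUnion Bk).sup (fun b => b.natAbs) :=
      Finset.le_sup hmem
    have h2 : 0 < 2^m := pow_pos (by norm_num) m
    omega
  have hD3 : 2^m < D := by
    have h2 : 0 < 2^m := pow_pos (by norm_num) m
    omega
  set u : ℕ → ℝ := fun n => entS1 μ (Finset.Ico (0:ℤ) (n:ℤ)) with hu
  have hsub : Subadditive u := by
    intro p q
    show entS1 μ (Finset.Ico (0:ℤ) ((p+q : ℕ):ℤ))
      ≤ entS1 μ (Finset.Ico (0:ℤ) (p:ℤ)) + entS1 μ (Finset.Ico (0:ℤ) (q:ℤ))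
    have hsplit : Finset.Ico (0:ℤ) ((p+q : ℕ):ℤ)
        = Finset.Ico (0:ℤ) (p:ℤ) ∪ Finset.Ico (p:ℤ) ((p:ℤ)+(q:ℤ)) := by
      have h := Finset.Ico_union_Ico_eq_Ico (a := (0:ℤ)) (b := (p:ℤ)) (c := (p:ℤ)+(q:ℤ))
        (Int.natCast_nonneg p) (by linarith [Int.natCast_nonneg q])
      have hc : ((p+q:ℕ):ℤ) = (p:ℤ)+(q:ℤ) := by push_cast; ring
      rw [hc, ← h]
    have htrans2 : Finset.Ico (p:ℤ) ((p:ℤ)+(q:ℤ)) = (Finset.Ico (0:ℤ) (q:ℤ)).image (· + (p:ℤ)) := by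
      rw [Finset.image_add_right_Ico]
      congr 1 <;> ring
    have hdisj : Disjoint (Finset.Ico (0:ℤ) (p:ℤ)) (Finset.Ico (p:ℤ) ((p:ℤ)+(q:ℤ))) :=
      Finset.Ico_disjoint_Ico_consecutive _ _ _
    rw [hsplit]
    calc entS1 μ (Finset.Ico (0:ℤ) (p:ℤ) ∪ Finset.Ico (p:ℤ) ((p:ℤ)+(q:ℤ)))
        ≤ entS1 μ (Finset.Ico (0:ℤ) (p:ℤ)) + entS1 μ (Finset.Ico (p:ℤ) ((p:ℤ)+(q:ℤ))) :=
          EntAux.entS1_union_le μ hdisj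
      _ = _ := by rw [htrans2, EntAux.entS1_translate μ hinv]
  have hbdd : BddBelow (Set.range fun n : ℕ => u n / n) := by
    refine ⟨0, ?_⟩
    rintro x ⟨n, rfl⟩
    exact div_nonneg (EntAux.entS1_nonneg μ _) (Nat.cast_nonneg n)
  refine ⟨hsub.lim, hsub.tendsto_lim hbdd, ?_⟩
  set SB : ℝ := condEnt1 μ {0} B with hSB
  set KK : ℝ := entS1 μ ({0} : Finset ℤ) with hKK
  set T : ℝ := (1 / 2 ^ m) * SB + ∑ k ∈ Finset.Icc 1 m, (1 / 2 ^ k : ℝ) *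
    min SB (condEnt1 μ {(2 : ℤ) ^ (k - 1)} (Bk k)) with hT
  set Ct : ℝ := ((m:ℝ)+1) * ((4*D : ℝ) * KK) with hCt
  have hkey : ∀ N : ℕ, 1 ≤ N → hsub.lim ≤ T + Ct / ((2^m * N : ℕ) : ℝ) := by
    intro N hN
    have hL1 : (2:ℕ)^m * N ≠ 0 := by positivity
    have hle := hsub.lim_le_div hbdd hL1
    have hcast : (((2^m * N : ℕ)):ℤ) = (2:ℤ)^m * (N:ℤ) := by push_cast; ring
    have huval : u (2^m * N) = entS1 μ (Finset.Ico (0:ℤ) ((2:ℤ)^m * N)) := by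
      show entS1 μ (Finset.Ico (0:ℤ) (((2^m*N : ℕ)):ℤ)) = _
      rw [hcast]
    have hw := EntAux.window μ hinv m B hB' Bk hBk' N D hD1 hD2 hD3
    rw [← hSB, ← hKK] at hw
    have hLpos : (0:ℝ) < ((2^m * N : ℕ):ℝ) := by positivity
    have hLT : ((2^m * N : ℕ):ℝ) * T = (N:ℝ)*SB + ∑ k ∈ Finset.Icc 1 m,
        ((2^(m-k)*N : ℕ):ℝ) * min SB (condEnt1 μ {(2:ℤ)^(k-1)} (Bk k)) := by
      rw [hT, mul_add, Finset.mul_sum]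
      congr 1
      · push_cast
        have h2m0 : (2:ℝ)^m ≠ 0 := by positivity
        field_simp
      · refine Finset.sum_congr rfl fun k hk => ?_
        have hkm : k ≤ m := (Finset.mem_Icc.mp hk).2
        have hpow : (2:ℝ)^(m-k) * 2^k = 2^m := by rw [← pow_add, Nat.sub_add_cancel hkm]
        have h2k0 : (2:ℝ)^k ≠ 0 := by positivity
        push_cast
        rw [← hpow]
        field_simp
    have hub : u (2^m * N) ≤ ((2^m * N : ℕ):ℝ) * T + Ct := by
      rw [huval, hLT, hCt]
      calc entS1 μ (Finset.Ico (0:ℤ) ((2:ℤ)^m * N)) ≤ _ := hw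
        _ = _ := by ring
    have h2 : u (2^m * N) ≤ (T + Ct/((2^m * N : ℕ):ℝ)) * ((2^m * N : ℕ):ℝ) := by
      rw [add_mul, div_mul_cancel₀ _ (ne_of_gt hLpos)]
      linarith
    exact hle.trans ((div_le_iff₀ hLpos).mpr h2)
  have htend : Filter.Tendsto (fun N : ℕ => T + Ct / ((2^m * N : ℕ):ℝ))
      Filter.atTop (nhds T) := by
    have h0 : Filter.Tendsto (fun N : ℕ => Ct / ((2^m * N : ℕ):ℝ)) Filter.atTop (nhds 0) := by
      have hfun : (fun N : ℕ => Ct / ((2^m * N : ℕ):ℝ)) = fun N : ℕ => (Ct / 2^m) / (N:ℝ) := by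
        funext N
        push_cast
        rw [div_div]
      rw [hfun]
      exact tendsto_const_div_atTop_nhds_zero_nat _
    have h1 := Filter.Tendsto.const_add T h0
    simpa using h1
  exact ge_of_tendsto htend (Filter.eventually_atTop.mpr ⟨1, fun N hN => hkey N hN⟩)
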